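/- Let g(z) = Σₙ gₙ zⁿ be the formal power series satisfying g = 1 + (1−t)·zg/(1−zg) over ℚ(t), and set Pₙ(t) so that Pₙ(−t) is the coefficient of zⁿ in g. Then Σ_{n≥0} Pₙ(t)zⁿ = (1 − tz − √((1−tz)² − 4z))/(2z) + 1 (with constant term 1), and the coefficient of tᵏ in Pₙ(t) counts Schröder paths of semilength n with exactly k horizontal steps. -/

import Mathlib

/-- Steps of a Schröder path: up `(1,1)`, down `(1,−1)`, horizontal `(2,0)`. -/
inductive SStep : Type
  | U : SStep
  | D : SStep
  | H : SStep
deriving DecidableEq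

/-- Height change of a step. -/
def SStep.hdiff : SStep → ℤ
  | .U => 1
  | .D => -1
  | .H => 0

/-- Horizontal extent of a step (so a path of semilength `n` has total extent `2n`). -/
def SStep.hlen : SStep → ℕ
  | .U => 1
  | .D => 1
  | .H => 2

/-- A Schröder path of semilength `n`: from `(0,0)` to `(2n,0)`, never going
below the horizontal axis. -/
def IsSchroeder (n : ℕ) (p : List SStep) : Prop :=
  (p.map SStep.hlen).sum = 2 * n ∧ (p.map SStep.hdiff).sum = 0 ∧
    ∀ q : List SStep, q <+: p → 0 ≤ (q.map SStep.hdiff).sum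

open PowerSeries Polynomial

instance : Fintype SStep :=
  ⟨⟨{.U, .D, .H}, by decide⟩, by intro x; cases x <;> decide⟩

lemma hlen_pos (s : SStep) : 1 ≤ s.hlen := by cases s <;> decide

lemma length_le_of_schroeder {n p} (h : IsSchroeder n p) : p.length ≤ 2 * n := by
  calc p.length = (p.map (fun _ => 1)).sum := by simp
  _ ≤ (p.map SStep.hlen).sum := by
      apply List.Forall₂.sum_le_sum
      rw [List.forall₂_map_right_iff, List.forall₂_map_left_iff]
      exact List.forall₂_same.mpr fun s _ => hlen_pos s
  _ = 2 * n := h.1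

lemma schroeder_finite (n k : ℕ) :
    Finite {p : List SStep // IsSchroeder n p ∧ p.count SStep.H = k} := by
  have : {p : List SStep | IsSchroeder n p ∧ p.count SStep.H = k} ⊆
      {l : List SStep | l.length ≤ 2 * n} := fun p hp => length_le_of_schroeder hp.1
  have hfin := (List.finite_length_le SStep (2 * n)).subset this
  exact hfin

lemma hdiff_hlen_parity (p : List SStep) :
    (2 : ℤ) ∣ ((p.map SStep.hlen).sum : ℤ) - (p.map SStep.hdiff).sum := by
  induction p with
  | nil => simp
  | cons s r ih =>
    simp only [List.map_cons, List.sum_cons]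
    rw [Nat.cast_add]
    have : ((s.hlen : ℤ) + (r.map SStep.hlen).sum) - (s.hdiff + (r.map SStep.hdiff).sum)
        = ((s.hlen : ℤ) - s.hdiff) + (((r.map SStep.hlen).sum : ℤ) - (r.map SStep.hdiff).sum) := by
      ring
    rw [this]
    exact dvd_add (by cases s <;> decide) ih

lemma schroeder_zero {p : List SStep} (h : IsSchroeder 0 p) : p = [] := by
  rcases p with _ | ⟨s, r⟩
  · rfl
  · exfalso
    have h1 := h.1
    simp only [List.map_cons, List.sum_cons, mul_zero] at h1
    have := hlen_pos s
    omega

lemma schroeder_nil : IsSchroeder 0 ([] : List SStep) := by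
  refine ⟨by simp, by simp, ?_⟩
  intro q hq
  rw [List.prefix_nil.mp hq]
  simp

lemma schroeder_cons_H {n p} (h : IsSchroeder n p) : IsSchroeder (n + 1) (.H :: p) := by
  refine ⟨?_, ?_, ?_⟩
  · simp only [List.map_cons, List.sum_cons, h.1]; simp [SStep.hlen]; ring
  · simp [SStep.hdiff, h.2.1]
  · intro q hq
    rcases q with _ | ⟨s, r⟩
    · simp
    · obtain ⟨heads, hpre⟩ := List.cons_prefix_cons.mp hq
      subst heads
      simpa [SStep.hdiff] using h.2.2 r hpre

lemma schroeder_of_cons_H {n p} (h : IsSchroeder (n + 1) (.H :: p)) : IsSchroeder n p := by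
  refine ⟨?_, ?_, ?_⟩
  · have h1 := h.1
    simp only [List.map_cons, List.sum_cons] at h1
    simp only [SStep.hlen] at h1
    omega
  · have h2 := h.2.1
    simpa [SStep.hdiff] using h2
  · intro q hq
    have := h.2.2 (.H :: q) (List.cons_prefix_cons.mpr ⟨rfl, hq⟩)
    simpa [SStep.hdiff] using this

lemma prefix_append_cons {r p q : List SStep} {x : SStep} (h : r <+: p ++ x :: q) :
    r <+: p ∨ ∃ r', r = p ++ x :: r' ∧ r' <+: q := by
  rcases le_or_gt r.length p.length with hle | hlt
  · left
    exact List.prefix_of_prefix_length_le h (p.prefix_append _) hle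
  · right
    have hp : p <+: r :=
      List.prefix_of_prefix_length_le (p.prefix_append _) h (by omega)
    obtain ⟨s, rfl⟩ := hp
    obtain ⟨t, ht⟩ := h
    rw [List.append_assoc, List.append_right_inj] at ht
    rcases s with _ | ⟨y, s'⟩
    · simp at hlt
    · rcases ht with ht
      have : y = x ∧ s' ++ t = q := by
        constructor
        · exact (List.cons.injEq _ _ _ _ ▸ ht).1
        · exact (List.cons.injEq _ _ _ _ ▸ ht).2
      exact ⟨s', by rw [this.1], ⟨t, this.2⟩⟩

lemma schroeder_UD {i j p q} (hp : IsSchroeder i p) (hq : IsSchroeder j q) :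
    IsSchroeder (i + j + 1) (.U :: p ++ .D :: q) := by
  refine ⟨?_, ?_, ?_⟩
  · simp only [List.cons_append, List.map_cons, List.map_append, List.sum_cons,
      List.sum_append, hp.1, hq.1]
    simp [SStep.hlen]; ring
  · simp only [List.cons_append, List.map_cons, List.map_append, List.sum_cons,
      List.sum_append, hp.2.1, hq.2.1]
    simp [SStep.hdiff]
  · intro r hr
    rcases r with _ | ⟨s, r⟩
    · simp
    · rw [List.cons_append] at hr
      obtain ⟨heads, hpre⟩ := List.cons_prefix_cons.mp hr
      subst heads
      rcases prefix_append_cons hpre with h1 | ⟨r', rfl, hr'⟩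
      · have := hp.2.2 r h1
        simp only [List.map_cons, List.sum_cons, SStep.hdiff]
        omega
      · have := hq.2.2 r' hr'
        simp only [List.map_cons, List.map_append, List.sum_cons, List.sum_append,
          SStep.hdiff, hp.2.1]
        omega

lemma sum_hdiff_even {p : List SStep} (h : (p.map SStep.hdiff).sum = 0) :
    2 ∣ (p.map SStep.hlen).sum := by
  have := hdiff_hlen_parity p
  rw [h, sub_zero] at this
  exact_mod_cast this

lemma UD_inj {p₁ p₂ p₁' p₂' : List SStep}
    (e : p₁ ++ .D :: p₂ = p₁' ++ .D :: p₂')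
    (h1 : (p₁.map SStep.hdiff).sum = 0) (h1' : (p₁'.map SStep.hdiff).sum = 0)
    (hpre : ∀ q, q <+: p₁ → 0 ≤ (q.map SStep.hdiff).sum)
    (hpre' : ∀ q, q <+: p₁' → 0 ≤ (q.map SStep.hdiff).sum) :
    p₁ = p₁' ∧ p₂ = p₂' := by
  have key : p₁ = p₁' := by
    have hp : p₁ <+: p₁' ++ .D :: p₂' := e ▸ p₁.prefix_append _
    rcases prefix_append_cons hp with h2 | ⟨r', rfl, _⟩
    · obtain ⟨s, rfl⟩ := h2
      rcases s with _ | ⟨y, s'⟩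
      · simp
      · exfalso
        rw [List.append_assoc, List.append_right_inj] at e
        have hy : y = SStep.D := (List.cons.injEq _ _ _ _ ▸ e).1.symm
        subst hy
        have := hpre' (p₁ ++ [SStep.D]) ⟨s', by simp⟩
        simp only [List.map_append, List.sum_append, h1, List.map_cons, List.map_nil,
          List.sum_cons, List.sum_nil, SStep.hdiff] at this
        omega
    · exfalso
      have := hpre (p₁' ++ [SStep.D]) ⟨r', by simp⟩
      simp only [List.map_append, List.sum_append, h1', List.map_cons, List.map_nil,
        List.sum_cons, List.sum_nil, SStep.hdiff] at this
      omega
  subst key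
  rw [List.append_right_inj] at e
  exact ⟨rfl, by injection e⟩

lemma schroeder_decomp {n : ℕ} {p : List SStep} (h : IsSchroeder (n + 1) p) :
    (∃ p', p = .H :: p' ∧ IsSchroeder n p') ∨
    (∃ i j p₁ p₂, i + j = n ∧ p = .U :: p₁ ++ .D :: p₂ ∧ IsSchroeder i p₁ ∧ IsSchroeder j p₂) := by
  rcases p with _ | ⟨s, r⟩
  · exfalso; have := h.1; simp at this
  rcases s with _ | _ | _
  · -- U case
    right
    have hsum_r : (r.map SStep.hdiff).sum = -1 := by
      have := h.2.1
      simp only [List.map_cons, List.sum_cons, SStep.hdiff] at this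
      omega
    classical
    have hex : ∃ m, ((r.take m).map SStep.hdiff).sum < 0 := ⟨r.length, by simp [hsum_r]⟩
    obtain ⟨m, hm, hmin⟩ : ∃ m, ((r.take m).map SStep.hdiff).sum < 0 ∧
        ∀ l, l < m → 0 ≤ ((r.take l).map SStep.hdiff).sum :=
      ⟨Nat.find hex, Nat.find_spec hex, fun l hl => le_of_not_gt (Nat.find_min hex hl)⟩
    obtain ⟨m', rfl⟩ : ∃ m', m = m' + 1 := by
      cases m with
      | zero => simp at hm
      | succ m' => exact ⟨m', rfl⟩
    have hmlen : m' + 1 ≤ r.length := by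
      by_contra hc
      push_neg at hc
      have h0 := hmin r.length hc
      rw [List.take_length, hsum_r] at h0
      exact absurd h0 (by norm_num)
    have hm1lt : m' < r.length := by omega
    have htake : r.take (m' + 1) = r.take m' ++ [r[m']'hm1lt] := by
      rw [List.take_succ, List.getElem?_eq_getElem hm1lt]
      rfl
    have hfm : ((r.take (m' + 1)).map SStep.hdiff).sum
        = ((r.take m').map SStep.hdiff).sum + (r[m']'hm1lt).hdiff := by
      rw [htake, List.map_append, List.sum_append, List.map_singleton, List.sum_singleton]
    have hfm1 : 0 ≤ ((r.take m').map SStep.hdiff).sum := hmin m' (by omega)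
    have hstep : r[m']'hm1lt = SStep.D ∧ ((r.take m').map SStep.hdiff).sum = 0 := by
      rcases hs : r[m']'hm1lt with _ | _ | _
      · exfalso
        have hd : (r[m']'hm1lt).hdiff = 1 := by rw [hs]; rfl
        omega
      · refine ⟨rfl, ?_⟩
        have hd : (r[m']'hm1lt).hdiff = -1 := by rw [hs]; rfl
        omega
      · exfalso
        have hd : (r[m']'hm1lt).hdiff = 0 := by rw [hs]; rfl
        omega
    have hrsplit : r = r.take m' ++ SStep.D :: r.drop (m' + 1) := by
      conv_lhs => rw [← List.take_append_drop m' r]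
      congr 1
      rw [List.drop_eq_getElem_cons hm1lt, hstep.1]
    set p₁ := r.take m' with hp₁
    set p₂ := r.drop (m' + 1) with hp₂
    have h1sum : (p₁.map SStep.hdiff).sum = 0 := hstep.2
    have h2sum : (p₂.map SStep.hdiff).sum = 0 := by
      have hsplit2 : (r.map SStep.hdiff).sum
          = ((r.take (m' + 1)).map SStep.hdiff).sum + (p₂.map SStep.hdiff).sum := by
        rw [← List.sum_append, ← List.map_append, List.take_append_drop]
      have hd : (r[m']'hm1lt).hdiff = -1 := by rw [hstep.1]; rfl
      have h10 := hstep.2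
      rw [hsum_r] at hsplit2
      omega
    have h1pre : ∀ q, q <+: p₁ → 0 ≤ (q.map SStep.hdiff).sum := by
      intro q hq
      rw [List.prefix_iff_eq_take.mp hq, hp₁, List.take_take]
      exact hmin _ (by omega)
    have h2pre : ∀ q, q <+: p₂ → 0 ≤ (q.map SStep.hdiff).sum := by
      intro q hq
      obtain ⟨t, ht⟩ := hq
      have hfull : (SStep.U :: p₁ ++ SStep.D :: q) <+: (SStep.U :: r) := by
        refine ⟨t, ?_⟩
        simp only [List.cons_append, List.cons.injEq, true_and]
        rw [List.append_assoc, List.cons_append, ht, ← hrsplit]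
      have := h.2.2 _ hfull
      simp only [List.cons_append, List.map_cons, List.map_append, List.sum_cons,
        List.sum_append, SStep.hdiff, h1sum] at this
      omega
    obtain ⟨i, hi⟩ : 2 ∣ (p₁.map SStep.hlen).sum := sum_hdiff_even h1sum
    obtain ⟨j, hj⟩ : 2 ∣ (p₂.map SStep.hlen).sum := sum_hdiff_even h2sum
    have hlensum : (1 : ℕ) + ((p₁.map SStep.hlen).sum + (1 + (p₂.map SStep.hlen).sum))
        = 2 * (n + 1) := by
      have h1 := h.1
      conv_lhs at h1 => rw [hrsplit]
      simpa [SStep.hlen, List.sum_append] using h1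
    exact ⟨i, j, p₁, p₂, by omega, by rw [hrsplit]; rfl, ⟨hi, h1sum, h1pre⟩, ⟨hj, h2sum, h2pre⟩⟩
  · exfalso
    have := h.2.2 [.D] ⟨r, rfl⟩
    simp [SStep.hdiff] at this
  · left
    exact ⟨r, rfl, schroeder_of_cons_H h⟩

lemma schroeder_finite' (n : ℕ) (Q : List SStep → Prop) :
    Finite {p : List SStep // IsSchroeder n p ∧ Q p} := by
  have hsub : {p : List SStep | IsSchroeder n p ∧ Q p} ⊆
      {l : List SStep | l.length ≤ 2 * n} := fun p hp => length_le_of_schroeder hp.1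
  exact (List.finite_length_le SStep (2 * n)).subset hsub

noncomputable def NS (n k : ℕ) : ℕ :=
  Nat.card {p : List SStep // IsSchroeder n p ∧ p.count SStep.H = k}

lemma count_H_UD (p q : List SStep) :
    (SStep.U :: p ++ SStep.D :: q).count SStep.H = p.count SStep.H + q.count SStep.H := by
  simp [List.count_cons, List.count_append]

lemma NS_zero (k : ℕ) : NS 0 k = if k = 0 then 1 else 0 := by
  rcases Nat.eq_zero_or_pos k with rfl | hk
  · rw [if_pos rfl]
    have : Unique {p : List SStep // IsSchroeder 0 p ∧ p.count SStep.H = 0} := by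
      refine ⟨⟨⟨[], schroeder_nil, rfl⟩⟩, ?_⟩
      rintro ⟨p, hp, hc⟩
      have := schroeder_zero hp
      subst this
      rfl
    exact Nat.card_unique
  · rw [if_neg (by omega)]
    have : IsEmpty {p : List SStep // IsSchroeder 0 p ∧ p.count SStep.H = k} := by
      refine ⟨?_⟩
      rintro ⟨p, hp, hc⟩
      have := schroeder_zero hp
      subst this
      simp at hc
      omega
    exact Nat.card_of_isEmpty

lemma nat_card_sigma {ι : Type*} [Fintype ι] {β : ι → Type*} [∀ i, Finite (β i)] :
    Nat.card (Σ i, β i) = ∑ i, Nat.card (β i) := by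
  letI : ∀ i, Fintype (β i) := fun i => Fintype.ofFinite _
  simp [Nat.card_eq_fintype_card, Fintype.card_sigma]

lemma NS_succ (n k : ℕ) :
    NS (n + 1) k = (if k = 0 then 0 else NS n (k - 1)) +
      ∑ ij ∈ Finset.HasAntidiagonal.antidiagonal n, ∑ ab ∈ Finset.HasAntidiagonal.antidiagonal k,
        NS ij.1 ab.1 * NS ij.2 ab.2 := by
  classical
  set T : ℕ → ℕ → Type := fun m l =>
    {p : List SStep // IsSchroeder m p ∧ p.count SStep.H = l} with hT
  letI : ∀ m l, Finite (T m l) := fun m l => schroeder_finite' m _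
  set A : Type := {p : List SStep // IsSchroeder n p ∧ p.count SStep.H + 1 = k} with hA
  letI : Finite A := schroeder_finite' n _
  set idx : Finset ((ℕ × ℕ) × ℕ × ℕ) := Finset.HasAntidiagonal.antidiagonal n ×ˢ Finset.HasAntidiagonal.antidiagonal k
    with hidx
  set S : Type := Σ x : idx, T x.1.1.1 x.1.2.1 × T x.1.1.2 x.1.2.2 with hS
  have hmemidx : ∀ x : idx, x.1.1.1 + x.1.1.2 = n ∧ x.1.2.1 + x.1.2.2 = k := by
    rintro ⟨⟨⟨i, j⟩, ⟨a, b⟩⟩, hx⟩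
    rw [hidx, Finset.mem_product] at hx
    exact ⟨Finset.HasAntidiagonal.mem_antidiagonal.mp hx.1, Finset.HasAntidiagonal.mem_antidiagonal.mp hx.2⟩
  let F : A ⊕ S → T (n + 1) k := fun x =>
    match x with
    | Sum.inl ⟨p, hp, hc⟩ => ⟨.H :: p, schroeder_cons_H hp, by
        rw [List.count_cons_self, hc]⟩
    | Sum.inr ⟨x, ⟨p, hp, hcp⟩, ⟨q, hq, hcq⟩⟩ => ⟨.U :: p ++ .D :: q, by
        have h1 := schroeder_UD hp hq
        rwa [(hmemidx x).1] at h1, by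
        rw [count_H_UD, hcp, hcq, (hmemidx x).2]⟩
  have hFbij : Function.Bijective F := by
    constructor
    · rintro (⟨p, hp, hcp⟩ | ⟨⟨⟨⟨i, j⟩, ⟨a, b⟩⟩, hx⟩, ⟨p, hp, hcp⟩, ⟨q, hq, hcq⟩⟩)
          (⟨p', hp', hcp'⟩ | ⟨⟨⟨⟨i', j'⟩, ⟨a', b'⟩⟩, hx'⟩, ⟨p', hp', hcp'⟩, ⟨q', hq', hcq'⟩⟩) hFxy
      · have h : SStep.H :: p = SStep.H :: p' := congrArg Subtype.val hFxy
        injection h with _ h2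
        subst h2
        rfl
      · have h : SStep.H :: p = SStep.U :: p' ++ SStep.D :: q' := congrArg Subtype.val hFxy
        rw [List.cons_append] at h
        injection h with h1 _
        exact absurd h1 (by simp)
      · have h : SStep.U :: p ++ SStep.D :: q = SStep.H :: p' := congrArg Subtype.val hFxy
        rw [List.cons_append] at h
        injection h with h1 _
        exact absurd h1 (by simp)
      · have h : SStep.U :: p ++ SStep.D :: q = SStep.U :: p' ++ SStep.D :: q' :=
          congrArg Subtype.val hFxy
        rw [List.cons_append, List.cons_append] at h
        injection h with _ h2
        obtain ⟨rfl, rfl⟩ :=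
          UD_inj h2 hp.2.1 hp'.2.1 hp.2.2 hp'.2.2
        obtain rfl : i = i' := by
          have e1 : (p.map SStep.hlen).sum = 2 * i := hp.1
          have e2 : (p.map SStep.hlen).sum = 2 * i' := hp'.1
          omega
        obtain rfl : a = a' := by
          have e1 : p.count SStep.H = a := hcp
          have e2 : p.count SStep.H = a' := hcp'
          omega
        obtain rfl : j = j' := by
          rw [hidx, Finset.mem_product] at hx hx'
          have e1 : i + j = n := Finset.HasAntidiagonal.mem_antidiagonal.mp hx.1
          have e2 : i + j' = n := Finset.HasAntidiagonal.mem_antidiagonal.mp hx'.1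
          omega
        obtain rfl : b = b' := by
          rw [hidx, Finset.mem_product] at hx hx'
          have e1 : a + b = k := Finset.HasAntidiagonal.mem_antidiagonal.mp hx.2
          have e2 : a + b' = k := Finset.HasAntidiagonal.mem_antidiagonal.mp hx'.2
          omega
        rfl
    · rintro ⟨p, hp, hc⟩
      rcases schroeder_decomp hp with ⟨p', rfl, hp'⟩ | ⟨i, j, p₁, p₂, hij, rfl, h1, h2⟩
      · rw [List.count_cons_self] at hc
        exact ⟨Sum.inl ⟨p', hp', hc⟩, rfl⟩
      · rw [count_H_UD] at hc
        have hx : ((i, j), (p₁.count SStep.H, p₂.count SStep.H)) ∈ idx := by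
          rw [hidx, Finset.mem_product]
          exact ⟨Finset.HasAntidiagonal.mem_antidiagonal.mpr hij, Finset.HasAntidiagonal.mem_antidiagonal.mpr hc⟩
        exact ⟨Sum.inr ⟨⟨((i, j), (p₁.count SStep.H, p₂.count SStep.H)), hx⟩,
          ⟨p₁, h1, rfl⟩, ⟨p₂, h2, rfl⟩⟩, rfl⟩
  have hcard : NS (n + 1) k = Nat.card A + Nat.card S := by
    have := Nat.card_congr (Equiv.ofBijective F hFbij)
    rw [Nat.card_sum] at this
    exact this.symm
  have hcardA : Nat.card A = if k = 0 then 0 else NS n (k - 1) := by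
    rcases Nat.eq_zero_or_pos k with rfl | hk
    · rw [if_pos rfl]
      have : IsEmpty A := ⟨by rintro ⟨p, hp, hc⟩; omega⟩
      exact Nat.card_of_isEmpty
    · rw [if_neg (by omega)]
      have hE : A ≃ T n (k - 1) :=
        Equiv.subtypeEquivRight fun p => and_congr_right fun _ => by omega
      exact Nat.card_congr hE
  have hcardS : Nat.card S = ∑ ij ∈ Finset.HasAntidiagonal.antidiagonal n, ∑ ab ∈ Finset.HasAntidiagonal.antidiagonal k,
      NS ij.1 ab.1 * NS ij.2 ab.2 := by
    rw [hS, nat_card_sigma]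
    have : ∀ x : idx, Nat.card (T x.1.1.1 x.1.2.1 × T x.1.1.2 x.1.2.2)
        = NS x.1.1.1 x.1.2.1 * NS x.1.1.2 x.1.2.2 := fun x => Nat.card_prod _ _
    rw [Finset.sum_congr rfl fun x _ => this x]
    rw [Finset.sum_coe_sort idx (fun x => NS x.1.1 x.2.1 * NS x.1.2 x.2.2)]
    rw [hidx, Finset.sum_product]
  rw [hcard, hcardA, hcardS]


/-- Let `g ∈ ℚ[t][[z]]` satisfy `g = 1 + (1−t)·zg/(1−zg)` (in cleared form), and
let `Pₙ(t)` be defined by `Pₙ(−t) = [zⁿ] g`. Then `h(z) = Σ Pₙ(t)zⁿ` is the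
algebraic series `(1 − tz − √((1−tz)² − 4z))/(2z)` (with constant term 1), i.e.
`z h² − (1−tz) h + 1 = 0`, and the coefficient of `tᵏ` in `Pₙ(t)` counts
Schröder paths of semilength `n` with exactly `k` horizontal steps. -/
theorem super_narayana_schroeder (g : PowerSeries (Polynomial ℚ))
    (heq : (1 - PowerSeries.X * g) * g =
      (1 - PowerSeries.X * g) +
        PowerSeries.C (R := Polynomial ℚ) (1 - Polynomial.X) * PowerSeries.X * g)
    (P : ℕ → Polynomial ℚ)
    (hP : ∀ n, P n = (PowerSeries.coeff (R := Polynomial ℚ) n g).comp (-Polynomial.X)) :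
    (PowerSeries.X * (PowerSeries.mk P) ^ 2 -
        (1 - PowerSeries.C (R := Polynomial ℚ) Polynomial.X * PowerSeries.X) *
          PowerSeries.mk P + 1 = 0) ∧
    ∀ n k : ℕ, (P n).coeff k =
      (Nat.card {p : List SStep // IsSchroeder n p ∧ p.count SStep.H = k} : ℚ) := by
  set φ : Polynomial ℚ →+* Polynomial ℚ :=
    (Polynomial.aeval (-Polynomial.X : Polynomial ℚ)).toRingHom with hφ
  have hcomp : ∀ p : Polynomial ℚ, p.comp (-Polynomial.X) = φ p := fun p => by
    rw [hφ]
    simp only [AlgHom.toRingHom_eq_coe, RingHom.coe_coe]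
    rw [Polynomial.comp, Polynomial.aeval_def, Polynomial.algebraMap_eq]
  have hg : PowerSeries.map φ g = PowerSeries.mk P := by
    ext n
    rw [PowerSeries.coeff_map, PowerSeries.coeff_mk, hP, hcomp]
  have heq' := congrArg (PowerSeries.map φ) heq
  simp only [map_mul, map_sub, map_add, map_one, PowerSeries.map_X, PowerSeries.map_C, hg] at heq'
  rw [show φ Polynomial.X = -Polynomial.X from by simp [hφ], map_neg] at heq'
  have part1 : PowerSeries.X * (PowerSeries.mk P) ^ 2 -
      (1 - PowerSeries.C (R := Polynomial ℚ) Polynomial.X * PowerSeries.X) *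
        PowerSeries.mk P + 1 = 0 := by
    linear_combination -heq'
  refine ⟨part1, ?_⟩
  -- coefficient recursion for P
  have hmk : PowerSeries.mk P = 1 +
      PowerSeries.C (R := Polynomial ℚ) Polynomial.X * (PowerSeries.X * PowerSeries.mk P) +
      PowerSeries.X * (PowerSeries.mk P * PowerSeries.mk P) := by
    linear_combination -part1
  have hP0 : P 0 = 1 := by
    have := congrArg (PowerSeries.coeff (R := Polynomial ℚ) 0) hmk
    simpa using this
  have hPS : ∀ n, P (n + 1) = Polynomial.X * P n +
      ∑ ij ∈ Finset.HasAntidiagonal.antidiagonal n, P ij.1 * P ij.2 := by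
    intro n
    have := congrArg (PowerSeries.coeff (R := Polynomial ℚ) (n + 1)) hmk
    rw [PowerSeries.coeff_mk, map_add, map_add, PowerSeries.coeff_one,
      PowerSeries.coeff_C_mul, PowerSeries.coeff_succ_X_mul, PowerSeries.coeff_succ_X_mul,
      PowerSeries.coeff_mk, PowerSeries.coeff_mul] at this
    simpa [PowerSeries.coeff_mk] using this
  -- coefficientwise recursion
  have hrec : ∀ n k, (P (n + 1)).coeff k = (if k = 0 then 0 else (P n).coeff (k - 1)) +
      ∑ ij ∈ Finset.HasAntidiagonal.antidiagonal n, ∑ ab ∈ Finset.HasAntidiagonal.antidiagonal k,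
        (P ij.1).coeff ab.1 * (P ij.2).coeff ab.2 := by
    intro n k
    rw [hPS n, Polynomial.coeff_add, Polynomial.finset_sum_coeff]
    congr 1
    · rcases k with _ | k'
      · simp
      · rw [Polynomial.coeff_X_mul, if_neg (by omega)]
        norm_num
    · exact Finset.sum_congr rfl fun ij _ => Polynomial.coeff_mul _ _ _
  -- main induction
  have main : ∀ n k, (P n).coeff k = (NS n k : ℚ) := by
    intro n
    induction n using Nat.strong_induction_on with
    | _ n ih =>
      match n with
      | 0 =>
        intro k
        rw [NS_zero, hP0, Polynomial.coeff_one]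
        by_cases hk : k = 0
        · rw [if_pos hk, if_pos hk]; norm_num
        · rw [if_neg hk, if_neg hk]; norm_num
      | Nat.succ n =>
        intro k
        rw [NS_succ, hrec]
        push_cast
        congr 1
        · by_cases hk : k = 0
          · simp [hk]
          · rw [if_neg hk, if_neg hk]
            exact ih n (by omega) (k - 1)
        · refine Finset.sum_congr rfl fun ij hij => Finset.sum_congr rfl fun ab _ => ?_
          have hijn : ij.1 + ij.2 = n := Finset.HasAntidiagonal.mem_antidiagonal.mp hij
          rw [ih ij.1 (by omega) ab.1, ih ij.2 (by omega) ab.2]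
  exact main
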